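/- Let A ∈ ℝ^{n×n}, B ∈ ℝ^{n×m}, R ∈ ℝ^{m×m} symmetric positive definite, P* ∈ ℝ^{n×n} symmetric positive semidefinite with R + BᵀP*B invertible, and set X* = (R + BᵀP*B)^{-1}BᵀP*A. Suppose X ∈ ℝ^{m×n} satisfies the Lyapunov identity P* = Q + XᵀRX + (A − BX)ᵀP*(A − BX) and P* also satisfies P* = Q + (X*)ᵀRX* + (A − BX*)ᵀP*(A − BX*). Then X = X*. -/

import Mathlib

open Matrix

theorem stmt4 (n m : ℕ)
    (A : Matrix (Fin n) (Fin n) ℝ) (B : Matrix (Fin n) (Fin m) ℝ)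
    (R : Matrix (Fin m) (Fin m) ℝ) (hR : R.PosDef)
    (Pstar : Matrix (Fin n) (Fin n) ℝ) (hP : Pstar.PosSemidef)
    (Q : Matrix (Fin n) (Fin n) ℝ) (hQ : Q.PosSemidef)
    (hinv : IsUnit (R + Bᵀ * Pstar * B))
    (Xstar : Matrix (Fin m) (Fin n) ℝ)
    (hXstar : Xstar = (R + Bᵀ * Pstar * B)⁻¹ * Bᵀ * Pstar * A)
    (X : Matrix (Fin m) (Fin n) ℝ)
    (hX : Pstar = Q + Xᵀ * R * X + (A - B * X)ᵀ * Pstar * (A - B * X))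
    (hXs : Pstar = Q + Xstarᵀ * R * Xstar
        + (A - B * Xstar)ᵀ * Pstar * (A - B * Xstar)) :
    X = Xstar := by
  set S : Matrix (Fin m) (Fin m) ℝ := R + Bᵀ * Pstar * B with hS
  have hPsym : Pstarᵀ = Pstar := by
    have := hP.isHermitian
    rwa [IsHermitian, conjTranspose_eq_transpose_of_trivial] at this
  have hRsym : Rᵀ = R := by
    have := hR.isHermitian
    rwa [IsHermitian, conjTranspose_eq_transpose_of_trivial] at this
  have hSsym : Sᵀ = S := by
    simp [hS, transpose_add, transpose_mul, hPsym, hRsym, Matrix.mul_assoc]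
  have hSpos : S.PosDef := by
    have h1 : (Bᵀ * Pstar * B).PosSemidef := by
      have := hP.conjTranspose_mul_mul_same B
      rwa [conjTranspose_eq_transpose_of_trivial] at this
    exact hR.add_posSemidef h1
  -- S * Xstar = Bᵀ * Pstar * A
  have hdet : IsUnit S.det := (isUnit_iff_isUnit_det S).mp hinv
  have hSX : S * Xstar = Bᵀ * Pstar * A := by
    rw [hXstar, ← Matrix.mul_assoc, ← Matrix.mul_assoc, ← Matrix.mul_assoc,
      Matrix.mul_nonsing_inv _ hdet, Matrix.one_mul]
  have hXsS : Xstarᵀ * S = Aᵀ * Pstar * B := by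
    have := congrArg transpose hSX
    rw [transpose_mul, hSsym, transpose_mul, transpose_mul, hPsym,
      transpose_transpose] at this
    rw [this, Matrix.mul_assoc]
  -- expand both Lyapunov identities
  have expand : ∀ Y : Matrix (Fin m) (Fin n) ℝ,
      Q + Yᵀ * R * Y + (A - B * Y)ᵀ * Pstar * (A - B * Y) =
      Q + Aᵀ * Pstar * A + Yᵀ * S * Y - Yᵀ * (S * Xstar)
        - (Xstarᵀ * S) * Y := by
    intro Y
    rw [hSX, hXsS, hS]
    simp only [transpose_sub, transpose_mul, Matrix.sub_mul, Matrix.mul_sub,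
      Matrix.add_mul, Matrix.mul_add, Matrix.mul_assoc]
    abel
  have heq : Q + Aᵀ * Pstar * A + Xᵀ * S * X - Xᵀ * (S * Xstar)
      - (Xstarᵀ * S) * X
      = Q + Aᵀ * Pstar * A + Xstarᵀ * S * Xstar - Xstarᵀ * (S * Xstar)
      - (Xstarᵀ * S) * Xstar := by
    rw [← expand X, ← expand Xstar, ← hX, ← hXs]
  set E : Matrix (Fin m) (Fin n) ℝ := X - Xstar with hE
  have key : Eᵀ * S * E = 0 := by
    have h2 : Eᵀ * S * E =
        (Q + Aᵀ * Pstar * A + Xᵀ * S * X - Xᵀ * (S * Xstar) - (Xstarᵀ * S) * X)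
        - (Q + Aᵀ * Pstar * A + Xstarᵀ * S * Xstar - Xstarᵀ * (S * Xstar)
          - (Xstarᵀ * S) * Xstar) := by
      rw [hE]
      simp only [transpose_sub, Matrix.sub_mul, Matrix.mul_sub, Matrix.mul_assoc]
      abel
    rw [h2, heq, sub_self]
  have hE0 : E = 0 := by
    by_contra hne
    obtain ⟨i, j, hij⟩ : ∃ i j, E i j ≠ 0 := by
      by_contra h
      push_neg at h
      exact hne (Matrix.ext h)
    have hv : E *ᵥ Pi.single j 1 ≠ 0 := by
      intro h0
      have := congrFun h0 i
      simp [Matrix.mulVec_single] at this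
      exact hij this
    have hpos := hSpos.dotProduct_mulVec_pos (x := E *ᵥ Pi.single j 1) hv
    have hstar : star (E *ᵥ Pi.single j 1) = E *ᵥ Pi.single j 1 := by
      ext k; simp
    have hzero : dotProduct (star (E *ᵥ Pi.single j 1))
        (S *ᵥ (E *ᵥ Pi.single j 1)) = 0 := by
      have hz0 : dotProduct (Pi.single j 1 : Fin n → ℝ)
          ((Eᵀ * S * E) *ᵥ Pi.single j 1) = 0 := by rw [key]; simp
      rw [← Matrix.mulVec_mulVec, ← Matrix.mulVec_mulVec,
        Matrix.dotProduct_mulVec, Matrix.vecMul_transpose] at hz0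
      rw [hstar]
      exact hz0
    rw [hzero] at hpos
    exact lt_irrefl 0 hpos
  rw [hE] at hE0
  exact sub_eq_zero.mp hE0
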